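/- Let α, β, ω, A be real numbers with ω ≠ 0, let T > 0, and let (uₙ) be a sequence of twice continuously differentiable functions on [0,T] satisfying the iteration uₙ(t) = A·cos(ωt) − (1/ω)·∫₀ᵗ sin(ω(t−x))·uₙ₋₁(x)·[α·uₙ₋₁(x)·uₙ₋₁''(x) + α·uₙ₋₁'(x)² + βω²·uₙ₋₁(x)²] dx for all n ≥ 1 and t ∈ [0,T]. Suppose there is a twice continuously differentiable function u on [0,T] such that uₙ → u, uₙ' → u', and uₙ'' → u'' uniformly on [0,T]. Then u satisfies the cantilever beam equation u''(t) + ω²u(t) + αu(t)²u''(t) + αu(t)u'(t)² + βω²u(t)³ = 0 on [0,T] with u(0) = A and u'(0) = 0. -/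

import Mathlib

open MeasureTheory Filter Set intervalIntegral Real Topology

/-- If a sequence of twice continuously differentiable functions
on `[0, T]` satisfies the Laplace-transform iteration and `uₙ`, `uₙ'`, `uₙ''`
converge uniformly on `[0, T]` to a twice continuously differentiable `u` and
its derivatives, then `u` solves the cantilever beam equation on `[0, T]`
with `u(0) = A`, `u'(0) = 0`. -/
theorem cantilever_uniform_limit_solves (α β ω A T : ℝ) (hω : ω ≠ 0)
    (hT : 0 < T) (useq : ℕ → ℝ → ℝ) (u : ℝ → ℝ)
    (hC2 : ∀ n, ∀ t ∈ Set.Icc (0:ℝ) T, DifferentiableAt ℝ (useq n) t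
      ∧ DifferentiableAt ℝ (deriv (useq n)) t
      ∧ ContinuousAt (deriv (deriv (useq n))) t)
    (hiter : ∀ n : ℕ, 1 ≤ n → ∀ t ∈ Set.Icc (0:ℝ) T,
      useq n t = A * Real.cos (ω * t)
        - (1 / ω) * ∫ x in (0:ℝ)..t, Real.sin (ω * (t - x)) * useq (n - 1) x
            * (α * useq (n - 1) x * deriv (deriv (useq (n - 1))) x
                + α * (deriv (useq (n - 1)) x) ^ 2
                + β * ω ^ 2 * (useq (n - 1) x) ^ 2))
    (huC2 : ∀ t ∈ Set.Icc (0:ℝ) T, DifferentiableAt ℝ u t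
      ∧ DifferentiableAt ℝ (deriv u) t ∧ ContinuousAt (deriv (deriv u)) t)
    (hconv : TendstoUniformlyOn (fun n => useq n) u Filter.atTop
      (Set.Icc (0:ℝ) T))
    (hconv' : TendstoUniformlyOn (fun n => deriv (useq n)) (deriv u)
      Filter.atTop (Set.Icc (0:ℝ) T))
    (hconv'' : TendstoUniformlyOn (fun n => deriv (deriv (useq n)))
      (deriv (deriv u)) Filter.atTop (Set.Icc (0:ℝ) T)) :
    (∀ t ∈ Set.Icc (0:ℝ) T, deriv (deriv u) t + ω ^ 2 * u t
      + α * (u t) ^ 2 * deriv (deriv u) t + α * u t * (deriv u t) ^ 2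
      + β * ω ^ 2 * (u t) ^ 3 = 0) ∧ u 0 = A ∧ deriv u 0 = 0 := by
  set S : Set ℝ := Set.Icc (0:ℝ) T with hS
  set O : Set ℝ := Set.Ioo (0:ℝ) T with hO
  have hOS : O ⊆ S := Set.Ioo_subset_Icc_self
  have hOopen : IsOpen O := isOpen_Ioo
  set F : ℝ → ℝ := fun x => u x * (α * u x * deriv (deriv u) x
      + α * (deriv u x) ^ 2 + β * ω ^ 2 * (u x) ^ 2) with hFdef
  -- continuity of F at every point of S
  have hFca : ∀ t ∈ S, ContinuousAt F t := by
    intro t ht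
    obtain ⟨h0, h1, h2⟩ := huC2 t ht
    exact (h0.continuousAt).mul
      ((((continuousAt_const.mul h0.continuousAt).mul h2).add
        (continuousAt_const.mul ((h1.continuousAt).pow 2))).add
        (continuousAt_const.mul ((h0.continuousAt).pow 2)))
  -- continuity of the iterates' data
  have hGca : ∀ n, ∀ t ∈ S, ContinuousAt (fun x => useq n x
      * (α * useq n x * deriv (deriv (useq n)) x
        + α * (deriv (useq n) x) ^ 2 + β * ω ^ 2 * (useq n x) ^ 2)) t := by
    intro n t ht
    obtain ⟨h0, h1, h2⟩ := hC2 n t ht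
    exact (h0.continuousAt).mul
      ((((continuousAt_const.mul h0.continuousAt).mul h2).add
        (continuousAt_const.mul ((h1.continuousAt).pow 2))).add
        (continuousAt_const.mul ((h0.continuousAt).pow 2)))
  -- Step A: the integral equation for u
  have hInner : ∀ n, ∀ x ∈ S, ContinuousAt (fun x =>
      α * useq n x * deriv (deriv (useq n)) x
        + α * (deriv (useq n) x) ^ 2 + β * ω ^ 2 * (useq n x) ^ 2) x := by
    intro n x hx
    obtain ⟨h0, h1, h2⟩ := hC2 n x hx
    exact (((continuousAt_const.mul h0.continuousAt).mul h2).add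
        (continuousAt_const.mul ((h1.continuousAt).pow 2))).add
        (continuousAt_const.mul ((h0.continuousAt).pow 2))
  -- bounds for u and its derivatives on the compact S
  obtain ⟨C0, hC0⟩ := isCompact_Icc.exists_bound_of_continuousOn
    (fun x hx => ((huC2 x hx).1.continuousAt).continuousWithinAt : ContinuousOn u S)
  obtain ⟨C1, hC1⟩ := isCompact_Icc.exists_bound_of_continuousOn
    (fun x hx => ((huC2 x hx).2.1.continuousAt).continuousWithinAt : ContinuousOn (deriv u) S)
  obtain ⟨C2, hC2'⟩ := isCompact_Icc.exists_bound_of_continuousOn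
    (fun x hx => ((huC2 x hx).2.2).continuousWithinAt : ContinuousOn (deriv (deriv u)) S)
  set D0 : ℝ := |C0| + 1 with hD0
  set D1 : ℝ := |C1| + 1 with hD1
  set D2 : ℝ := |C2| + 1 with hD2
  set K : ℝ := |α| * D0 * D2 + |α| * D1 ^ 2 + |β| * ω ^ 2 * D0 ^ 2 with hK
  have hD0pos : 0 < D0 := by positivity
  have hD1pos : 0 < D1 := by positivity
  have hD2pos : 0 < D2 := by positivity
  -- eventual bounds for the iterates
  have ev0 : ∀ᶠ n in atTop, ∀ x ∈ S, |useq n x| ≤ D0 := by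
    refine ((Metric.tendstoUniformlyOn_iff.1 hconv) 1 one_pos).mono ?_
    intro n hn x hx
    have := hn x hx
    rw [Real.dist_eq] at this
    have hb := hC0 x hx
    rw [Real.norm_eq_abs] at hb
    have : |useq n x| ≤ |u x| + |u x - useq n x| := by
      have := abs_sub_abs_le_abs_sub (useq n x) (u x)
      rw [abs_sub_comm] at this
      linarith [abs_nonneg (u x - useq n x)]
    calc |useq n x| ≤ |u x| + |u x - useq n x| := this
      _ ≤ C0 + 1 := by
          have := hn x hx; rw [Real.dist_eq] at this; linarith
      _ ≤ D0 := by rw [hD0]; linarith [le_abs_self C0]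
  have ev1 : ∀ᶠ n in atTop, ∀ x ∈ S, |deriv (useq n) x| ≤ D1 := by
    refine ((Metric.tendstoUniformlyOn_iff.1 hconv') 1 one_pos).mono ?_
    intro n hn x hx
    have hd := hn x hx
    rw [Real.dist_eq] at hd
    have hb := hC1 x hx
    rw [Real.norm_eq_abs] at hb
    have htri : |deriv (useq n) x| ≤ |deriv u x| + |deriv u x - deriv (useq n) x| := by
      have := abs_sub_abs_le_abs_sub (deriv (useq n) x) (deriv u x)
      rw [abs_sub_comm] at this
      linarith [abs_nonneg (deriv u x - deriv (useq n) x)]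
    calc |deriv (useq n) x| ≤ |deriv u x| + |deriv u x - deriv (useq n) x| := htri
      _ ≤ C1 + 1 := by linarith
      _ ≤ D1 := by rw [hD1]; linarith [le_abs_self C1]
  have ev2 : ∀ᶠ n in atTop, ∀ x ∈ S, |deriv (deriv (useq n)) x| ≤ D2 := by
    refine ((Metric.tendstoUniformlyOn_iff.1 hconv'') 1 one_pos).mono ?_
    intro n hn x hx
    have hd := hn x hx
    rw [Real.dist_eq] at hd
    have hb := hC2' x hx
    rw [Real.norm_eq_abs] at hb
    have htri : |deriv (deriv (useq n)) x| ≤ |deriv (deriv u) x|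
        + |deriv (deriv u) x - deriv (deriv (useq n)) x| := by
      have := abs_sub_abs_le_abs_sub (deriv (deriv (useq n)) x) (deriv (deriv u) x)
      rw [abs_sub_comm] at this
      linarith [abs_nonneg (deriv (deriv u) x - deriv (deriv (useq n)) x)]
    calc |deriv (deriv (useq n)) x| ≤ |deriv (deriv u) x|
          + |deriv (deriv u) x - deriv (deriv (useq n)) x| := htri
      _ ≤ C2 + 1 := by linarith
      _ ≤ D2 := by rw [hD2]; linarith [le_abs_self C2]
  have hA : ∀ t ∈ S, u t = A * Real.cos (ω * t)
      - (1 / ω) * ∫ x in (0:ℝ)..t, Real.sin (ω * (t - x)) * F x := by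
    intro t ht
    have hsub : Set.uIoc (0:ℝ) t ⊆ S := by
      rw [Set.uIoc_of_le ht.1]
      exact fun x hx => ⟨hx.1.le, hx.2.trans ht.2⟩
    -- dominated convergence for the integrals
    have hDCT : Tendsto (fun n => ∫ x in (0:ℝ)..t, Real.sin (ω * (t - x)) * useq n x
        * (α * useq n x * deriv (deriv (useq n)) x
          + α * (deriv (useq n) x) ^ 2 + β * ω ^ 2 * (useq n x) ^ 2)) atTop
        (𝓝 (∫ x in (0:ℝ)..t, Real.sin (ω * (t - x)) * F x)) := by
      refine intervalIntegral.tendsto_integral_filter_of_dominated_convergence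
        (fun _ => D0 * K) ?_ ?_ intervalIntegrable_const ?_
      · refine Filter.Eventually.of_forall fun n => ?_
        refine ContinuousOn.aestronglyMeasurable ?_ measurableSet_uIoc
        intro x hx
        obtain ⟨h0, _, _⟩ := hC2 n x (hsub hx)
        exact (((by fun_prop : Continuous fun x : ℝ =>
          Real.sin (ω * (t - x))).continuousAt.mul h0.continuousAt).mul
          (hInner n x (hsub hx))).continuousWithinAt
      · refine ((ev0.and (ev1.and ev2)).mono fun n hn => ?_)
        refine MeasureTheory.ae_of_all _ fun x hx => ?_
        obtain ⟨b0, b1, b2⟩ := hn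
        have hb0 := b0 x (hsub hx)
        have hb1 := b1 x (hsub hx)
        have hb2 := b2 x (hsub hx)
        have hInb : |α * useq n x * deriv (deriv (useq n)) x
            + α * (deriv (useq n) x) ^ 2 + β * ω ^ 2 * (useq n x) ^ 2| ≤ K := by
          calc |α * useq n x * deriv (deriv (useq n)) x
              + α * (deriv (useq n) x) ^ 2 + β * ω ^ 2 * (useq n x) ^ 2|
              ≤ |α * useq n x * deriv (deriv (useq n)) x|
                + |α * (deriv (useq n) x) ^ 2| + |β * ω ^ 2 * (useq n x) ^ 2| :=
                (abs_add_le _ _).trans (add_le_add (abs_add_le _ _) le_rfl)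
            _ ≤ |α| * D0 * D2 + |α| * D1 ^ 2 + |β| * ω ^ 2 * D0 ^ 2 := by
                have e1 : |α * useq n x * deriv (deriv (useq n)) x|
                    = |α| * |useq n x| * |deriv (deriv (useq n)) x| := by
                  rw [abs_mul, abs_mul]
                have e2 : |α * (deriv (useq n) x) ^ 2| = |α| * |deriv (useq n) x| ^ 2 := by
                  rw [abs_mul, abs_pow]
                have e3 : |β * ω ^ 2 * (useq n x) ^ 2| = |β| * ω ^ 2 * |useq n x| ^ 2 := by
                  rw [abs_mul, abs_mul, abs_pow, abs_pow, sq_abs]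
                rw [e1, e2, e3]
                gcongr <;> positivity
            _ = K := hK.symm
        have hsin1 : |Real.sin (ω * (t - x))| ≤ 1 := Real.abs_sin_le_one _
        rw [Real.norm_eq_abs, abs_mul, abs_mul]
        have m1 : |Real.sin (ω * (t - x))| * |useq n x| ≤ 1 * D0 :=
          mul_le_mul hsin1 hb0 (abs_nonneg _) zero_le_one
        have m2 := mul_le_mul m1 hInb (abs_nonneg _) (by positivity : (0:ℝ) ≤ 1 * D0)
        calc |Real.sin (ω * (t - x))| * |useq n x|
              * |α * useq n x * deriv (deriv (useq n)) x
                + α * (deriv (useq n) x) ^ 2 + β * ω ^ 2 * (useq n x) ^ 2|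
            ≤ 1 * D0 * K := m2
          _ = D0 * K := by ring
      · refine MeasureTheory.ae_of_all _ fun x hx => ?_
        have hx' := hsub hx
        have l0 : Tendsto (fun n => useq n x) atTop (𝓝 (u x)) := hconv.tendsto_at hx'
        have l1 : Tendsto (fun n => deriv (useq n) x) atTop (𝓝 (deriv u x)) :=
          hconv'.tendsto_at hx'
        have l2 : Tendsto (fun n => deriv (deriv (useq n)) x) atTop
            (𝓝 (deriv (deriv u) x)) := hconv''.tendsto_at hx'
        have hval : Real.sin (ω * (t - x)) * F x
            = Real.sin (ω * (t - x)) * u x * (α * u x * deriv (deriv u) x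
              + α * (deriv u x) ^ 2 + β * ω ^ 2 * (u x) ^ 2) := by
          rw [hFdef]; ring
        rw [hval]
        exact ((tendsto_const_nhds.mul l0)).mul
          ((((tendsto_const_nhds.mul l0).mul l2).add
            (tendsto_const_nhds.mul (l1.pow 2))).add (tendsto_const_nhds.mul (l0.pow 2)))
    have lim1 : Tendsto (fun n => useq (n + 1) t) atTop (𝓝 (u t)) :=
      (hconv.tendsto_at ht).comp (tendsto_add_atTop_nat 1)
    have eq1 : ∀ n : ℕ, useq (n + 1) t = A * Real.cos (ω * t)
        - (1 / ω) * ∫ x in (0:ℝ)..t, Real.sin (ω * (t - x)) * useq n x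
          * (α * useq n x * deriv (deriv (useq n)) x
            + α * (deriv (useq n) x) ^ 2 + β * ω ^ 2 * (useq n x) ^ 2) := by
      intro n
      simpa using hiter (n + 1) (by omega) t ht
    have lim2 : Tendsto (fun n => useq (n + 1) t) atTop
        (𝓝 (A * Real.cos (ω * t)
          - (1 / ω) * ∫ x in (0:ℝ)..t, Real.sin (ω * (t - x)) * F x)) := by
      rw [show (fun n => useq (n + 1) t) = fun n => A * Real.cos (ω * t)
        - (1 / ω) * ∫ x in (0:ℝ)..t, Real.sin (ω * (t - x)) * useq n x
          * (α * useq n x * deriv (deriv (useq n)) x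
            + α * (deriv (useq n) x) ^ 2 + β * ω ^ 2 * (useq n x) ^ 2)
        from funext eq1]
      exact tendsto_const_nhds.sub (tendsto_const_nhds.mul hDCT)
    exact tendsto_nhds_unique lim1 lim2
  -- interval integrability of trig * F
  have hFint : ∀ g : ℝ → ℝ, Continuous g → ∀ t ∈ S,
      IntervalIntegrable (fun x => g x * F x) volume 0 t := by
    intro g hg t ht
    apply ContinuousOn.intervalIntegrable
    rw [Set.uIcc_of_le ht.1]
    intro x hx
    exact ((hg.continuousAt.mul (hFca x ⟨hx.1, hx.2.trans ht.2⟩)).continuousWithinAt)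
  have hFintc : ∀ t ∈ S, IntervalIntegrable (fun x => Real.cos (ω * x) * F x) volume 0 t :=
    fun t ht => hFint _ (by fun_prop) t ht
  have hFints : ∀ t ∈ S, IntervalIntegrable (fun x => Real.sin (ω * x) * F x) volume 0 t :=
    fun t ht => hFint _ (by fun_prop) t ht
  set Ic : ℝ → ℝ := fun t => ∫ x in (0:ℝ)..t, Real.cos (ω * x) * F x with hIc
  set Is : ℝ → ℝ := fun t => ∫ x in (0:ℝ)..t, Real.sin (ω * x) * F x with hIs
  set g : ℝ → ℝ := fun t => A * Real.cos (ω * t)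
      - (1 / ω) * (Real.sin (ω * t) * Ic t - Real.cos (ω * t) * Is t) with hg
  -- Step B : u = g on S
  have hug : Set.EqOn u g S := by
    intro t ht
    rw [hA t ht, hg]
    congr 1
    congr 1
    rw [hIc, hIs, ← intervalIntegral.integral_const_mul, ← intervalIntegral.integral_const_mul,
      ← intervalIntegral.integral_sub
        ((hFintc t ht).const_mul _) ((hFints t ht).const_mul _)]
    apply intervalIntegral.integral_congr
    intro x _
    simp only
    rw [mul_sub ω t x, Real.sin_sub]
    ring
  -- derivatives of the primitives at interior points
  have hFmeas : ∀ g : ℝ → ℝ, Continuous g → ∀ t ∈ O,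
      StronglyMeasurableAtFilter (fun x => g x * F x) (𝓝 t) volume := by
    intro g hg t ht
    refine ContinuousOn.stronglyMeasurableAtFilter hOopen ?_ t ht
    intro x hx
    exact (hg.continuousAt.mul (hFca x (hOS hx))).continuousWithinAt
  have hIc' : ∀ t ∈ O, HasDerivAt Ic (Real.cos (ω * t) * F t) t := by
    intro t ht
    exact intervalIntegral.integral_hasDerivAt_right
      (hFintc t (hOS ht)) (hFmeas _ (by fun_prop) t ht)
      (((by fun_prop : Continuous fun x : ℝ => Real.cos (ω * x)).continuousAt).mul
        (hFca t (hOS ht)))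
  have hIs' : ∀ t ∈ O, HasDerivAt Is (Real.sin (ω * t) * F t) t := by
    intro t ht
    exact intervalIntegral.integral_hasDerivAt_right
      (hFints t (hOS ht)) (hFmeas _ (by fun_prop) t ht)
      (((by fun_prop : Continuous fun x : ℝ => Real.sin (ω * x)).continuousAt).mul
        (hFca t (hOS ht)))
  set h : ℝ → ℝ := fun t => -(A * ω) * Real.sin (ω * t)
      - (Real.cos (ω * t) * Ic t + Real.sin (ω * t) * Is t) with hh
  have hsin : ∀ t : ℝ, HasDerivAt (fun t => Real.sin (ω * t)) (Real.cos (ω * t) * ω) t := by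
    intro t
    have := (Real.hasDerivAt_sin (ω * t)).comp t ((hasDerivAt_id t).const_mul ω)
    refine this.congr_deriv (Eq.symm ?_)
    ring
  have hcos : ∀ t : ℝ, HasDerivAt (fun t => Real.cos (ω * t)) (-Real.sin (ω * t) * ω) t := by
    intro t
    have := (Real.hasDerivAt_cos (ω * t)).comp t ((hasDerivAt_id t).const_mul ω)
    refine this.congr_deriv (Eq.symm ?_)
    ring
  -- g has derivative h on O
  have hg' : ∀ t ∈ O, HasDerivAt g (h t) t := by
    intro t ht
    have := ((hcos t).const_mul A).sub
      ((((hsin t).mul (hIc' t ht)).sub ((hcos t).mul (hIs' t ht))).const_mul (1/ω))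
    refine this.congr_deriv (Eq.symm ?_)
    rw [hh]
    field_simp
    ring
  -- hence u has derivative h on O
  have hu' : ∀ t ∈ O, HasDerivAt u (h t) t := by
    intro t ht
    exact (hg' t ht).congr_of_eventuallyEq
      ((hOopen.eventually_mem ht).mono fun x hx => hug (hOS hx))
  have hu'eq : ∀ t ∈ O, deriv u t = h t := fun t ht => (hu' t ht).deriv
  -- h has derivative -ω² u - F on O
  have hh' : ∀ t ∈ O, HasDerivAt h (-(ω ^ 2) * u t - F t) t := by
    intro t ht
    have := (((hsin t).const_mul (-(A * ω))).sub
      ((((hcos t).mul (hIc' t ht)).add ((hsin t).mul (hIs' t ht)))))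
    refine this.congr_deriv (Eq.symm ?_)
    rw [hug (hOS ht), hg]
    have hpy := Real.sin_sq_add_cos_sq (ω * t)
    field_simp
    linear_combination (u t * α * deriv u t ^ 2 + u t ^ 2 * α * deriv (deriv u) t + ω ^ 2 * u t ^ 3 * β) * hpy
  -- second derivative of u on O
  have hu'' : ∀ t ∈ O, deriv (deriv u) t = -(ω ^ 2) * u t - F t := by
    intro t ht
    have : HasDerivAt (deriv u) (-(ω ^ 2) * u t - F t) t := by
      refine (hh' t ht).congr_of_eventuallyEq ?_
      exact (hOopen.eventually_mem ht).mono fun x hx => hu'eq x hx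
    exact this.deriv
  -- the ODE on O
  have hEO : ∀ t ∈ O, deriv (deriv u) t + ω ^ 2 * u t
      + α * (u t) ^ 2 * deriv (deriv u) t + α * u t * (deriv u t) ^ 2
      + β * ω ^ 2 * (u t) ^ 3 = 0 := by
    intro t ht
    have e := hu'' t ht
    simp only [hFdef] at e
    linear_combination e
  -- the ODE extends to S by continuity
  have hmain : ∀ t ∈ S, deriv (deriv u) t + ω ^ 2 * u t
      + α * (u t) ^ 2 * deriv (deriv u) t + α * u t * (deriv u t) ^ 2
      + β * ω ^ 2 * (u t) ^ 3 = 0 := by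
    intro t ht
    have hcl : t ∈ closure O := by
      rw [hO, closure_Ioo hT.ne]
      exact ht
    have hne : (𝓝[O] t).NeBot := mem_closure_iff_nhdsWithin_neBot.1 hcl
    set E : ℝ → ℝ := fun t => deriv (deriv u) t + ω ^ 2 * u t
      + α * (u t) ^ 2 * deriv (deriv u) t + α * u t * (deriv u t) ^ 2
      + β * ω ^ 2 * (u t) ^ 3 with hE
    have hEc : ContinuousAt E t := by
      obtain ⟨h0, h1, h2⟩ := huC2 t ht
      exact ((((h2.add (continuousAt_const.mul h0.continuousAt)).add
        ((continuousAt_const.mul ((h0.continuousAt).pow 2)).mul h2)).add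
        ((continuousAt_const.mul h0.continuousAt).mul ((h1.continuousAt).pow 2))).add
        (continuousAt_const.mul ((h0.continuousAt).pow 3)))
    have t1 : Tendsto E (𝓝[O] t) (𝓝 (E t)) := hEc.continuousWithinAt
    have t2 : Tendsto E (𝓝[O] t) (𝓝 0) := by
      refine Tendsto.congr' ?_ tendsto_const_nhds
      exact eventually_mem_nhdsWithin.mono fun x hx => (hEO x hx).symm
    exact (tendsto_nhds_unique t1 t2)
  refine ⟨hmain, ?_, ?_⟩
  · have := hA 0 ⟨le_refl 0, hT.le⟩
    simpa using this
  · -- deriv u 0 = 0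
    have hne : (𝓝[O] (0:ℝ)).NeBot := by
      apply mem_closure_iff_nhdsWithin_neBot.1
      rw [hO, closure_Ioo hT.ne]
      exact ⟨le_refl 0, hT.le⟩
    have hdc : ContinuousAt (deriv u) 0 :=
      (huC2 0 ⟨le_refl 0, hT.le⟩).2.1.continuousAt
    have t1 : Tendsto (deriv u) (𝓝[O] 0) (𝓝 (deriv u 0)) := hdc.continuousWithinAt
    have hIcC : ContinuousOn Ic S := by
      have := intervalIntegral.continuousOn_primitive_interval'
        (hFintc T ⟨hT.le, le_refl T⟩) Set.left_mem_uIcc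
      rwa [Set.uIcc_of_le hT.le] at this
    have hIsC : ContinuousOn Is S := by
      have := intervalIntegral.continuousOn_primitive_interval'
        (hFints T ⟨hT.le, le_refl T⟩) Set.left_mem_uIcc
      rwa [Set.uIcc_of_le hT.le] at this
    have h0S : (0:ℝ) ∈ S := ⟨le_refl 0, hT.le⟩
    have hhC : ContinuousWithinAt h S 0 := by
      refine ContinuousWithinAt.sub ?_ ?_
      · exact ((by fun_prop : Continuous fun t : ℝ =>
          -(A * ω) * Real.sin (ω * t)).continuousWithinAt)
      · exact (((by fun_prop : Continuous fun t : ℝ =>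
            Real.cos (ω * t)).continuousWithinAt).mul (hIcC 0 h0S)).add
          (((by fun_prop : Continuous fun t : ℝ =>
            Real.sin (ω * t)).continuousWithinAt).mul (hIsC 0 h0S))
    have h00 : h 0 = 0 := by
      simp [hh, hIc, hIs]
    have t2 : Tendsto (deriv u) (𝓝[O] 0) (𝓝 0) := by
      have t3 : Tendsto h (𝓝[O] 0) (𝓝 0) := by
        have := hhC.mono_left (nhdsWithin_mono 0 hOS)
        rwa [h00] at this
      refine t3.congr' ?_
      exact eventually_mem_nhdsWithin.mono fun x hx => (hu'eq x hx).symm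
    haveI := hne
    exact tendsto_nhds_unique t1 t2
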